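/- Let α ∈ (0,1], β > 0 and k₀ > 0. Then there exists a constant c > 0 such that for every r > 0, ∫_0^∞ t^{β−1} e^{−r k₀ · min(t, t^{α})} dt ≤ c (1 + r^{−β/α}). -/

import Mathlib

open MeasureTheory Set

private lemma aux_val5 {p q b : ℝ} (hp : 0 < p) (hq : -1 < q) (hb : 0 < b) :
    ∫ x in Set.Ioi (0:ℝ), x ^ q * Real.exp (-(b * x ^ p)) =
      b ^ (-(q + 1) / p) * (1 / p) * Real.Gamma ((q + 1) / p) := by
  rw [← integral_rpow_mul_exp_neg_mul_rpow hp hq hb]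
  simp only [neg_mul]

private lemma aux_int5 {p q b : ℝ} (hp : 0 < p) (hq : -1 < q) (hb : 0 < b) :
    IntegrableOn (fun t : ℝ => t ^ q * Real.exp (-(b * t ^ p))) (Set.Ioi 0) := by
  have hs : -1 < (q + 1) / p - 1 := by
    have : 0 < (q + 1) / p := div_pos (by linarith) hp
    linarith
  have h1 : IntegrableOn (fun x : ℝ => x ^ ((q + 1) / p - 1) * Real.exp (-(b * x)))
      (Set.Ioi 0) := by
    have := integrableOn_rpow_mul_exp_neg_mul_rpow hs one_pos hb
    refine this.congr_fun (fun x hx => ?_) measurableSet_Ioi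
    beta_reduce
    rw [Real.rpow_one, neg_mul]
  have h2 := (integrableOn_Ioi_comp_rpow_iff'
      (fun x : ℝ => x ^ ((q + 1) / p - 1) * Real.exp (-(b * x))) hp.ne').mpr h1
  refine h2.congr_fun (fun x hx => ?_) measurableSet_Ioi
  have hx0 : (0:ℝ) < x := hx
  beta_reduce
  rw [smul_eq_mul, ← Real.rpow_mul hx0.le p ((q + 1) / p - 1)]
  have hexp : p * ((q + 1) / p - 1) = q + 1 - p := by field_simp
  rw [hexp, ← mul_assoc, ← Real.rpow_add hx0, show p - 1 + (q + 1 - p) = q by ring]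

theorem stmt5 (α β k₀ : ℝ) (hα : α ∈ Set.Ioc (0:ℝ) 1) (hβ : 0 < β) (hk₀ : 0 < k₀) :
    ∃ c > 0, ∀ r : ℝ, 0 < r →
      ∫⁻ t in Set.Ioi (0:ℝ),
          ENNReal.ofReal (t ^ (β - 1) * Real.exp (-(r * k₀ * min t (t ^ α)))) ≤
        ENNReal.ofReal (c * (1 + r ^ (-β / α))) := by
  obtain ⟨hα0, hα1⟩ := hα
  set K₁ : ℝ := k₀ ^ (-β) * Real.Gamma β with hK₁
  set K₂ : ℝ := k₀ ^ (-β / α) * (1 / α) * Real.Gamma (β / α) with hK₂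
  have hK₁pos : 0 < K₁ := by positivity
  have hK₂pos : 0 < K₂ := by
    have : 0 < β / α := div_pos hβ hα0
    positivity
  refine ⟨K₁ + K₂, by positivity, fun r hr => ?_⟩
  have hb : 0 < r * k₀ := mul_pos hr hk₀
  have hq : -1 < β - 1 := by linarith
  -- the two dominating functions
  set g₁ : ℝ → ℝ := fun t => t ^ (β - 1) * Real.exp (-(r * k₀ * t)) with hg₁
  set g₂ : ℝ → ℝ := fun t => t ^ (β - 1) * Real.exp (-(r * k₀ * t ^ α)) with hg₂
  have hmeas₁ : Measurable fun t : ℝ => ENNReal.ofReal (g₁ t) := by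
    apply Measurable.ennreal_ofReal; fun_prop
  have hmeas₂ : Measurable fun t : ℝ => ENNReal.ofReal (g₂ t) := by
    apply Measurable.ennreal_ofReal; fun_prop
  have hstep1 :
      ∫⁻ t in Set.Ioi (0:ℝ),
          ENNReal.ofReal (t ^ (β - 1) * Real.exp (-(r * k₀ * min t (t ^ α)))) ≤
        (∫⁻ t in Set.Ioi (0:ℝ), ENNReal.ofReal (g₁ t)) +
          ∫⁻ t in Set.Ioi (0:ℝ), ENNReal.ofReal (g₂ t) := by
    rw [← lintegral_add_left hmeas₁]
    apply lintegral_mono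
    intro t
    dsimp only
    rcases min_cases t (t ^ α) with ⟨h, _⟩ | ⟨h, _⟩
    · rw [h]; exact le_add_right le_rfl
    · rw [h]; exact le_add_left le_rfl
  -- integrability
  have hint₁ : IntegrableOn g₁ (Set.Ioi 0) := by
    have := aux_int5 one_pos hq hb
    refine this.congr_fun (fun x hx => ?_) measurableSet_Ioi
    simp only [hg₁, Real.rpow_one, mul_assoc]
  have hint₂ : IntegrableOn g₂ (Set.Ioi 0) := by
    have := aux_int5 hα0 hq hb
    refine this.congr_fun (fun x hx => ?_) measurableSet_Ioi
    simp only [hg₂, mul_assoc]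
  have hnn₁ : 0 ≤ᵐ[volume.restrict (Set.Ioi (0:ℝ))] g₁ := by
    filter_upwards [ae_restrict_mem measurableSet_Ioi] with t ht
    have : (0:ℝ) < t := ht
    positivity
  have hnn₂ : 0 ≤ᵐ[volume.restrict (Set.Ioi (0:ℝ))] g₂ := by
    filter_upwards [ae_restrict_mem measurableSet_Ioi] with t ht
    have : (0:ℝ) < t := ht
    positivity
  have hv₁ : ∫ t in Set.Ioi (0:ℝ), g₁ t =
      (r * k₀) ^ (-(β - 1 + 1) / 1) * (1 / 1) * Real.Gamma ((β - 1 + 1) / 1) := by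
    rw [← aux_val5 one_pos hq hb]
    refine setIntegral_congr_fun measurableSet_Ioi (fun x hx => ?_)
    simp only [hg₁, Real.rpow_one, mul_assoc]
  have hv₂ : ∫ t in Set.Ioi (0:ℝ), g₂ t =
      (r * k₀) ^ (-(β - 1 + 1) / α) * (1 / α) * Real.Gamma ((β - 1 + 1) / α) := by
    rw [← aux_val5 hα0 hq hb]
  have hl₁ : ∫⁻ t in Set.Ioi (0:ℝ), ENNReal.ofReal (g₁ t)
      = ENNReal.ofReal (r ^ (-β) * K₁) := by
    rw [← ofReal_integral_eq_lintegral_ofReal hint₁ hnn₁, hv₁]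
    congr 1
    rw [hK₁, Real.mul_rpow hr.le hk₀.le, show -(β - 1 + 1) / 1 = -β by ring,
      show (β - 1 + 1) / 1 = β by ring]
    ring
  have hl₂ : ∫⁻ t in Set.Ioi (0:ℝ), ENNReal.ofReal (g₂ t)
      = ENNReal.ofReal (r ^ (-β / α) * K₂) := by
    rw [← ofReal_integral_eq_lintegral_ofReal hint₂ hnn₂, hv₂]
    congr 1
    rw [hK₂, Real.mul_rpow hr.le hk₀.le, show -(β - 1 + 1) / α = -β / α by ring,
      show (β - 1 + 1) / α = β / α by ring]
    ring
  -- key real inequality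
  have hrβα : 0 ≤ r ^ (-β / α) := Real.rpow_nonneg hr.le _
  have hkey : r ^ (-β) ≤ 1 + r ^ (-β / α) := by
    rcases le_total 1 r with h1 | h1
    · have := Real.rpow_le_one_of_one_le_of_nonpos h1 (by linarith : -β ≤ 0)
      linarith
    · have hβα : β ≤ β / α := by
        rw [le_div_iff₀ hα0]; nlinarith
      have h2 : -β / α ≤ -β := by rw [neg_div]; linarith
      have := Real.rpow_le_rpow_of_exponent_ge hr h1 h2
      linarith
  calc _ ≤ (∫⁻ t in Set.Ioi (0:ℝ), ENNReal.ofReal (g₁ t)) +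
          ∫⁻ t in Set.Ioi (0:ℝ), ENNReal.ofReal (g₂ t) := hstep1
    _ = ENNReal.ofReal (r ^ (-β) * K₁) + ENNReal.ofReal (r ^ (-β / α) * K₂) := by
        rw [hl₁, hl₂]
    _ = ENNReal.ofReal (r ^ (-β) * K₁ + r ^ (-β / α) * K₂) := by
        rw [ENNReal.ofReal_add (by positivity) (by positivity)]
    _ ≤ ENNReal.ofReal ((K₁ + K₂) * (1 + r ^ (-β / α))) := by
        apply ENNReal.ofReal_le_ofReal
        nlinarith [mul_le_mul_of_nonneg_right hkey hK₁pos.le]
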